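/- arXiv:2605.11404 — 8 statements merged into one kernel-verified Lean document; each statement's English description precedes it below -/
import Mathlib

section
/- Let N > n ≥ 2, D ≥ 1, and let μ : ℝ^D → ℝ be of class C². Suppose f_N(z_1,…,z_N) = (1/N)·Σ_{j=1}^N μ(z_j) and f_n(y_1,…,y_n) = (1/n)·Σ_{j=1}^n μ(y_j). Fix a subset S ⊆ {1,…,N} with |S| = n, a baseline z⁰ ∈ ℝ^D, and features z = (z_1,…,z_N) ∈ (ℝ^D)^N such that Δv^S ≠ 0 and Δv^{[N]} ≠ 0. Then the scalar c(S,z) := (Σ_{j∈[N]} (μ(z_j) − μ(z⁰))) / (Σ_{j∈S} (μ(z_j) − μ(z⁰))) satisfies φ̃_i^S = c(S,z) · φ̃_i for every i ∈ S; in particular c(S,z) does not depend on i. -/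
open scoped BigOperators

lemma fderiv_avg {n D : ℕ} (μ : (Fin D → ℝ) → ℝ) (hμ : Differentiable ℝ μ)
    (c : ℝ) (p : Fin n → Fin D → ℝ) (i : Fin n) (v : Fin D → ℝ) :
    fderiv ℝ (fun y : Fin n → Fin D → ℝ => c * ∑ j : Fin n, μ (y j)) p
      (Pi.single i v) = c * fderiv ℝ μ (p i) v := by
  have hterm : ∀ j : Fin n, HasFDerivAt (fun y : Fin n → Fin D → ℝ => μ (y j))
      ((fderiv ℝ μ (p j)).comp (ContinuousLinearMap.proj j)) p := by
    intro j
    exact ((hμ (p j)).hasFDerivAt).comp p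
      ((ContinuousLinearMap.proj j : (Fin n → Fin D → ℝ) →L[ℝ] (Fin D → ℝ)).hasFDerivAt)
  have hsum : HasFDerivAt (fun y : Fin n → Fin D → ℝ => c * ∑ j : Fin n, μ (y j))
      (c • ∑ j : Fin n, (fderiv ℝ μ (p j)).comp (ContinuousLinearMap.proj j)) p := by
    have := HasFDerivAt.sum (fun j (_ : j ∈ Finset.univ) => hterm j)
    simpa using this.const_mul c
  rw [hsum.fderiv]
  simp only [ContinuousLinearMap.smul_apply, ContinuousLinearMap.sum_apply,
    ContinuousLinearMap.comp_apply, ContinuousLinearMap.proj_apply, smul_eq_mul]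
  congr 1
  rw [Finset.sum_eq_single i]
  · simp
  · intro j _ hji
    simp [Pi.single_eq_of_ne hji]
  · simp

noncomputable def psiAS {D : ℕ} (μ : (Fin D → ℝ) → ℝ) (z0 x : Fin D → ℝ) : ℝ :=
  ∑ d : Fin D, (x d - z0 d) *
    ∫ τ in (0:ℝ)..1, fderiv ℝ μ (z0 + τ • (x - z0)) (Pi.single d 1)

noncomputable def phiAS {n D : ℕ} (f : (Fin n → Fin D → ℝ) → ℝ)
    (z0 : Fin D → ℝ) (z : Fin n → Fin D → ℝ) (i : Fin n) : ℝ :=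
  ∑ d : Fin D, (z i d - z0 d) *
    ∫ τ in (0:ℝ)..1,
      fderiv ℝ f (fun j => z0 + τ • (z j - z0)) (Pi.single i (Pi.single d 1))

lemma phiAS_avg {n D : ℕ} (μ : (Fin D → ℝ) → ℝ) (hμ : Differentiable ℝ μ)
    (c : ℝ) (f : (Fin n → Fin D → ℝ) → ℝ)
    (hf : ∀ y, f y = c * ∑ j : Fin n, μ (y j))
    (z0 : Fin D → ℝ) (z : Fin n → Fin D → ℝ) (i : Fin n) :
    phiAS f z0 z i = c * psiAS μ z0 (z i) := by
  have hfe : f = fun y : Fin n → Fin D → ℝ => c * ∑ j : Fin n, μ (y j) := funext hf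
  unfold phiAS psiAS
  rw [hfe, Finset.mul_sum]
  refine Finset.sum_congr rfl fun d _ => ?_
  have h1 : ∀ τ : ℝ,
      fderiv ℝ (fun y : Fin n → Fin D → ℝ => c * ∑ j : Fin n, μ (y j))
        (fun j => z0 + τ • (z j - z0)) (Pi.single i (Pi.single d 1)) =
      c * fderiv ℝ μ (z0 + τ • (z i - z0)) (Pi.single d 1) := fun τ =>
    fderiv_avg μ hμ c (fun j => z0 + τ • (z j - z0)) i (Pi.single d 1)
  simp only [h1, intervalIntegral.integral_const_mul]
  ring

/-- Attribution Scaling Bias, linear case: if both the subset value function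
`f_n` and the full-population value function `f_N` are linear with a shared
`C²` generator `μ`, then the normalized subset attribution equals the explicit
agent-independent scalar
`c(S,z) = (Σ_{j∈[N]} (μ(z_j) − μ(z⁰))) / (Σ_{j∈S} (μ(z_j) − μ(z⁰)))`
times the normalized full-population attribution, for every `i ∈ S`. -/
theorem attribution_scaling_bias_linear_case
    (N n D : ℕ) (hn : 2 ≤ n) (hNn : n < N) (hD : 1 ≤ D)
    (μ : (Fin D → ℝ) → ℝ) (hμ : ContDiff ℝ 2 μ)
    (fn : (Fin n → Fin D → ℝ) → ℝ) (fN : (Fin N → Fin D → ℝ) → ℝ)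
    (hfn : ∀ y, fn y = (1 / (n : ℝ)) * ∑ j : Fin n, μ (y j))
    (hfN : ∀ w, fN w = (1 / (N : ℝ)) * ∑ j : Fin N, μ (w j))
    (S : Finset (Fin N)) (hS : S.card = n)
    (z0 : Fin D → ℝ) (z : Fin N → Fin D → ℝ)
    (hΔS : fn (fun k => (z ((S.orderIsoOfFin hS k : S) : Fin N))) -
        fn (fun _ => z0) ≠ 0)
    (hΔN : fN z - fN (fun _ => z0) ≠ 0) :
    ∀ (i : Fin N) (hi : i ∈ S),
      phiAS fn z0 (fun k => (z ((S.orderIsoOfFin hS k : S) : Fin N)))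
          ((S.orderIsoOfFin hS).symm ⟨i, hi⟩) /
          (fn (fun k => (z ((S.orderIsoOfFin hS k : S) : Fin N))) -
            fn (fun _ => z0)) =
        ((∑ j : Fin N, (μ (z j) - μ z0)) / (∑ j ∈ S, (μ (z j) - μ z0))) *
          (phiAS fN z0 z i / (fN z - fN (fun _ => z0))) := by
  intro i hi
  have hμd : Differentiable ℝ μ := hμ.differentiable (by norm_num)
  set zS : Fin n → Fin D → ℝ := fun k => (z ((S.orderIsoOfFin hS k : S) : Fin N))
  set k0 : Fin n := (S.orderIsoOfFin hS).symm ⟨i, hi⟩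
  have hzk0 : zS k0 = z i := by
    show z ((S.orderIsoOfFin hS k0 : S) : Fin N) = z i
    rw [OrderIso.apply_symm_apply]
  -- sum over subset indices
  have hsumS : ∑ k : Fin n, μ (zS k) = ∑ j ∈ S, μ (z j) := by
    rw [← Finset.sum_coe_sort S (fun j => μ (z j))]
    exact Fintype.sum_equiv (S.orderIsoOfFin hS).toEquiv _ _ (fun k => rfl)
  have hn0 : (n : ℝ) ≠ 0 := by positivity
  have hN0 : (N : ℝ) ≠ 0 := by
    have : 0 < N := lt_of_le_of_lt (Nat.zero_le n) hNn
    positivity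
  set AS : ℝ := ∑ j ∈ S, (μ (z j) - μ z0)
  set AN : ℝ := ∑ j : Fin N, (μ (z j) - μ z0)
  have hΔS' : fn zS - fn (fun _ => z0) = (1 / (n : ℝ)) * AS := by
    rw [hfn, hfn, hsumS]
    simp only [AS, Finset.sum_sub_distrib, Finset.sum_const, hS, nsmul_eq_mul,
      Finset.card_univ, Fintype.card_fin]
    ring
  have hΔN' : fN z - fN (fun _ => z0) = (1 / (N : ℝ)) * AN := by
    rw [hfN, hfN]
    simp only [AN, Finset.sum_sub_distrib, Finset.sum_const, nsmul_eq_mul,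
      Finset.card_univ, Fintype.card_fin]
    ring
  have hAN : AN ≠ 0 := by
    intro h; apply hΔN; rw [hΔN', h, mul_zero]
  have hphiS : phiAS fn z0 zS k0 = (1 / (n : ℝ)) * psiAS μ z0 (z i) := by
    rw [phiAS_avg μ hμd _ fn hfn z0 zS k0, hzk0]
  have hphiN : phiAS fN z0 z i = (1 / (N : ℝ)) * psiAS μ z0 (z i) := by
    rw [phiAS_avg μ hμd _ fN hfN z0 z i]
  rw [hphiS, hphiN, hΔS', hΔN',
    mul_div_mul_left _ _ (by simpa using hn0),
    mul_div_mul_left _ _ (by simpa using hN0)]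
  field_simp
end

section
/- Hessian characterization, converse direction: fix n ≥ 2 and D ≥ 1, and let f_n : (ℝ^D)^n → ℝ be of class C² and permutation-invariant. If ∂²f_n/(∂z_{i,d} ∂z_{j,d'})(z) = 0 for all i ≠ j in {1,…,n}, all d, d' in {1,…,D}, and all z ∈ (ℝ^D)^n, then there exists a C² function μ : ℝ^D → ℝ such that f_n(z_1,…,z_n) = (1/n)·Σ_{i=1}^n μ(z_i) for all z ∈ (ℝ^D)^n. -/
open scoped BigOperators

/-- Mixed second partial derivative `∂²f/(∂z_{i,d} ∂z_{j,d'})` of a function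
of `n` feature vectors in `ℝ^D`. -/
noncomputable def mixedPartial {n D : ℕ} (f : (Fin n → Fin D → ℝ) → ℝ)
    (i : Fin n) (d : Fin D) (j : Fin n) (d' : Fin D)
    (z : Fin n → Fin D → ℝ) : ℝ :=
  fderiv ℝ (fun w => fderiv ℝ f w (Pi.single j (Pi.single d' 1))) z
    (Pi.single i (Pi.single d 1))

/-- Hessian characterization, converse direction: if `f` is `C²`,
permutation-invariant, and all mixed second partial derivatives across
distinct slots vanish identically, then `f` is linear, i.e. there is a `C²`
generator `μ : ℝ^D → ℝ` with `f(z_1,…,z_n) = (1/n)·Σ_i μ(z_i)`. -/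
theorem hessian_characterization_converse
    (n D : ℕ) (hn : 2 ≤ n) (hD : 1 ≤ D)
    (f : (Fin n → Fin D → ℝ) → ℝ) (hf : ContDiff ℝ 2 f)
    (hsym : ∀ (π : Equiv.Perm (Fin n)) (z : Fin n → Fin D → ℝ),
      f (fun k => z (π k)) = f z)
    (hhess : ∀ (i j : Fin n), i ≠ j →
      ∀ (d d' : Fin D) (z : Fin n → Fin D → ℝ), mixedPartial f i d j d' z = 0) :
    ∃ μ : (Fin D → ℝ) → ℝ, ContDiff ℝ 2 μ ∧
      ∀ z : Fin n → Fin D → ℝ, f z = (1 / (n : ℝ)) * ∑ i : Fin n, μ (z i) := by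
  classical
  have hnR : (n : ℝ) ≠ 0 := by
    have : 0 < n := lt_of_lt_of_le (by norm_num) hn
    exact_mod_cast this.ne'
  have hdf : Differentiable ℝ f := hf.differentiable (by norm_num)
  have hf1 : ContDiff ℝ 1 (fderiv ℝ f) := hf.fderiv_right (by norm_num)
  have hdf' : Differentiable ℝ (fderiv ℝ f) := hf1.differentiable one_ne_zero
  have happ : ∀ (v z : Fin n → Fin D → ℝ),
      HasFDerivAt (fun w => fderiv ℝ f w v)
        ((ContinuousLinearMap.apply ℝ ℝ v).comp (fderiv ℝ (fderiv ℝ f) z)) z :=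
    fun v z => (ContinuousLinearMap.apply ℝ ℝ v).hasFDerivAt.comp z (hdf' z).hasFDerivAt
  have hdec : ∀ (k : Fin n) (a : Fin D → ℝ),
      (Pi.single k a : Fin n → Fin D → ℝ)
        = ∑ d : Fin D, a d • (Pi.single k (Pi.single d (1 : ℝ)) : Fin n → Fin D → ℝ) := by
    intro k a
    have h2 : ∀ d : Fin D, (Pi.single k (Pi.single d (a d)) : Fin n → Fin D → ℝ)
        = a d • (Pi.single k (Pi.single d (1:ℝ)) : Fin n → Fin D → ℝ) := by
      intro d
      have h3 : (Pi.single d (a d) : Fin D → ℝ) = a d • (Pi.single d (1:ℝ) : Fin D → ℝ) := by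
        rw [← Pi.single_smul, smul_eq_mul, mul_one]
      rw [h3, Pi.single_smul]
    calc (Pi.single k a : Fin n → Fin D → ℝ)
        = Pi.single k (∑ d : Fin D, (Pi.single d (a d) : Fin D → ℝ)) := by
          rw [Finset.univ_sum_single]
      _ = ∑ d : Fin D, (Pi.single k (Pi.single d (a d)) : Fin n → Fin D → ℝ) :=
          map_sum (LinearMap.single ℝ (fun _ : Fin n => Fin D → ℝ) k) _ Finset.univ
      _ = ∑ d : Fin D, a d • (Pi.single k (Pi.single d (1:ℝ)) : Fin n → Fin D → ℝ) :=
          Finset.sum_congr rfl fun d _ => h2 d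
  have hbasis : ∀ (i j : Fin n), i ≠ j → ∀ (d d' : Fin D) (z : Fin n → Fin D → ℝ),
      fderiv ℝ (fderiv ℝ f) z (Pi.single i (Pi.single d (1:ℝ)))
        (Pi.single j (Pi.single d' (1:ℝ))) = 0 := by
    intro i j hij d d' z
    have h := hhess i j hij d d' z
    unfold mixedPartial at h
    rw [(happ (Pi.single j (Pi.single d' 1)) z).fderiv] at h
    exact h
  have hcross : ∀ (z : Fin n → Fin D → ℝ) (i j : Fin n), i ≠ j →
      ∀ (a b : Fin D → ℝ),
      fderiv ℝ (fderiv ℝ f) z (Pi.single i a) (Pi.single j b) = 0 := by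
    intro z i j hij a b
    rw [hdec j b, map_sum]
    refine Finset.sum_eq_zero fun d' _ => ?_
    have hinner : (fderiv ℝ (fderiv ℝ f) z) (Pi.single i a)
        (Pi.single j (Pi.single d' (1:ℝ))) = 0 := by
      rw [hdec i a, map_sum, ContinuousLinearMap.sum_apply]
      refine Finset.sum_eq_zero fun d _ => ?_
      rw [map_smul, ContinuousLinearMap.smul_apply, smul_eq_mul,
        hbasis i j hij d d' z, mul_zero]
    rw [map_smul, hinner, smul_zero]
  have hkey : ∀ (z : Fin n → Fin D → ℝ) (k : Fin n) (b : Fin D → ℝ),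
      fderiv ℝ f z (Pi.single k b)
        = fderiv ℝ f (Pi.single k (z k)) (Pi.single k b) := by
    intro z k b
    set c : Fin n → Fin D → ℝ := Pi.single k (z k) with hc
    set u : Fin n → Fin D → ℝ := z - c with hu
    have huk : u k = 0 := by simp [hu, hc]
    have hud : u = ∑ j : Fin n, Pi.single j (u j) := (Finset.univ_sum_single u).symm
    have hγ : ∀ t : ℝ, HasDerivAt (fun s : ℝ => c + s • u) u t := fun t => by
      simpa using ((hasDerivAt_id t).smul_const u).const_add c
    have hψd : ∀ t : ℝ, HasDerivAt (fun s : ℝ => fderiv ℝ f (c + s • u) (Pi.single k b))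
        (((ContinuousLinearMap.apply ℝ ℝ (Pi.single k b)).comp
          (fderiv ℝ (fderiv ℝ f) (c + t • u))) u) t := fun t =>
      by have := (happ (Pi.single k b) (c + t • u)).comp_hasDerivAt_of_eq t (hγ t) rfl; exact this
    have hval : ∀ t : ℝ, (((ContinuousLinearMap.apply ℝ ℝ (Pi.single k b)).comp
          (fderiv ℝ (fderiv ℝ f) (c + t • u))) u) = 0 := by
      intro t
      rw [ContinuousLinearMap.comp_apply, ContinuousLinearMap.apply_apply]
      set w := c + t • u with hw
      conv_lhs => rw [hud]
      rw [map_sum, ContinuousLinearMap.sum_apply]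
      refine Finset.sum_eq_zero fun j _ => ?_
      rcases eq_or_ne j k with rfl | hjk
      · rw [huk]
        simp
      · exact hcross w j k hjk (u j) b
    have hconst : fderiv ℝ f (c + (1:ℝ) • u) (Pi.single k b)
        = fderiv ℝ f (c + (0:ℝ) • u) (Pi.single k b) :=
      is_const_of_deriv_eq_zero (fun t => (hψd t).differentiableAt)
        (fun t => by rw [(hψd t).deriv, hval t]) 1 0
    have h1 : c + (1:ℝ) • u = z := by rw [one_smul, hu]; abel
    have h0 : c + (0:ℝ) • u = c := by rw [zero_smul, add_zero]
    rw [h1, h0] at hconst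
    exact hconst
  set L : Fin n → (Fin n → Fin D → ℝ) →L[ℝ] (Fin n → Fin D → ℝ) := fun k =>
    (LinearMap.toContinuousLinearMap
      (LinearMap.single ℝ (fun _ : Fin n => Fin D → ℝ) k)).comp
      (ContinuousLinearMap.proj k) with hL
  have hLapp : ∀ (k : Fin n) (w : Fin n → Fin D → ℝ), L k w = Pi.single k (w k) :=
    fun k w => rfl
  set H : (Fin n → Fin D → ℝ) → ℝ :=
    fun z => f z - ∑ k : Fin n, f (Pi.single k (z k)) with hH
  have hHd : ∀ z : Fin n → Fin D → ℝ,
      HasFDerivAt H (0 : (Fin n → Fin D → ℝ) →L[ℝ] ℝ) z := by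
    intro z
    have hterm : ∀ k : Fin n, HasFDerivAt (fun w => f (Pi.single k (w k)))
        ((fderiv ℝ f (L k z)).comp (L k)) z :=
      fun k => (hdf (L k z)).hasFDerivAt.comp z (L k).hasFDerivAt
    have hsum : HasFDerivAt (fun w => ∑ k : Fin n, f (Pi.single k (w k)))
        (∑ k : Fin n, (fderiv ℝ f (L k z)).comp (L k)) z :=
      HasFDerivAt.fun_sum (fun k _ => hterm k)
    have hHd' : HasFDerivAt H
        (fderiv ℝ f z - ∑ k : Fin n, (fderiv ℝ f (L k z)).comp (L k)) z :=
      (hdf z).hasFDerivAt.sub hsum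
    have hzero : fderiv ℝ f z - (∑ k : Fin n, (fderiv ℝ f (L k z)).comp (L k)) = 0 := by
      ext v
      simp only [ContinuousLinearMap.sub_apply, ContinuousLinearMap.sum_apply,
        ContinuousLinearMap.comp_apply, ContinuousLinearMap.zero_apply]
      rw [sub_eq_zero]
      have hvd : v = ∑ k : Fin n, Pi.single k (v k) := (Finset.univ_sum_single v).symm
      conv_lhs => rw [hvd]
      rw [map_sum]
      refine Finset.sum_congr rfl fun k _ => ?_
      rw [hkey z k (v k)]
      rfl
    rw [← hzero]
    exact hHd'
  have hHconst : ∀ z : Fin n → Fin D → ℝ, H z = H 0 :=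
    fun z => is_const_of_fderiv_eq_zero (fun w => (hHd w).differentiableAt)
      (fun w => (hHd w).fderiv) z 0
  have hH0 : H 0 = f 0 - n * f 0 := by
    simp only [hH, Pi.zero_apply, Pi.single_zero, Finset.sum_const, Finset.card_univ,
      Fintype.card_fin, nsmul_eq_mul]
  set i0 : Fin n := ⟨0, by omega⟩ with hi0
  have hperm : ∀ (k : Fin n) (x : Fin D → ℝ),
      f (Pi.single k x) = f (Pi.single i0 x) := by
    intro k x
    have h := hsym (Equiv.swap k i0) (Pi.single i0 x)
    have heq : (fun m => (Pi.single i0 x : Fin n → Fin D → ℝ) (Equiv.swap k i0 m))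
        = Pi.single k x := by
      funext m
      rcases eq_or_ne m k with rfl | hmk
      · rw [Equiv.swap_apply_left, Pi.single_eq_same, Pi.single_eq_same]
      · rcases eq_or_ne m i0 with rfl | hmi0
        · rw [Equiv.swap_apply_right, Pi.single_eq_of_ne (Ne.symm hmk),
            Pi.single_eq_of_ne hmk]
        · rw [Equiv.swap_apply_of_ne_of_ne hmk hmi0, Pi.single_eq_of_ne hmi0,
            Pi.single_eq_of_ne hmk]
    rw [heq] at h
    exact h
  refine ⟨fun x => n * f (Pi.single i0 x) - ((n : ℝ) - 1) * f 0, ?_, ?_⟩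
  · have hL0 : ContDiff ℝ 2 (fun x : Fin D → ℝ =>
        (LinearMap.toContinuousLinearMap
          (LinearMap.single ℝ (fun _ : Fin n => Fin D → ℝ) i0)) x) :=
      (LinearMap.toContinuousLinearMap
        (LinearMap.single ℝ (fun _ : Fin n => Fin D → ℝ) i0)).contDiff
    have hcomp : ContDiff ℝ 2 (fun x : Fin D → ℝ => f (Pi.single i0 x)) :=
      hf.comp hL0
    exact (contDiff_const.mul hcomp).sub contDiff_const
  · intro z
    have h1 : f z = ∑ k : Fin n, f (Pi.single k (z k)) + (f 0 - n * f 0) := by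
      have h := hHconst z
      rw [hH0] at h
      simp only [hH] at h
      linarith
    have h2 : ∀ k : Fin n, f (Pi.single k (z k)) = f (Pi.single i0 (z k)) :=
      fun k => hperm k (z k)
    rw [h1, Finset.sum_congr rfl (fun k _ => h2 k)]
    rw [Finset.sum_sub_distrib, ← Finset.mul_sum, Finset.sum_const, Finset.card_univ,
      Fintype.card_fin, nsmul_eq_mul]
    field_simp
    ring
end

section
/- Explicit reconciliation failure at minimal size N = 3: take D = 1, zero baseline z⁰ = 0, value functions f_n(z) = (1/n²)·Σ_{1 ≤ i < j ≤ n} z_i·z_j for n ∈ {2,3}, features (z_1, z_2, z_3) = (1, 1, 2), and subset S = {1, 3}. Then Δv^{[3]} = 5/9 ≠ 0 and Δv^S = 1/2 ≠ 0, the full-population normalized attributions are φ̃_1 = φ̃_2 = 3/10 and φ̃_3 = 2/5, the subset normalized attributions are φ̃_1^S = φ̃_3^S = 1/2, and there exists no scalar c ∈ ℝ with φ̃_i^S = c·φ̃_i for every i ∈ S. -/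
open scoped BigOperators

/-- Aumann–Shapley path-integral attribution of agent `i` with zero baseline
in dimension one: `φ_i = z_i · ∫₀¹ (∂f/∂z_i)(τ·z) dτ`. -/
noncomputable def phi01 {n : ℕ} (f : (Fin n → ℝ) → ℝ)
    (z : Fin n → ℝ) (i : Fin n) : ℝ :=
  z i * ∫ τ in (0:ℝ)..1, fderiv ℝ f (τ • z) (Pi.single i 1)

lemma sum3 (w : Fin 3 → ℝ) :
    ∑ i : Fin 3, ∑ j ∈ Finset.Ioi i, w i * w j
      = w 0 * w 1 + w 0 * w 2 + w 1 * w 2 := by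
  rw [Fin.sum_univ_three,
    show Finset.Ioi (0:Fin 3) = {1,2} from by decide,
    show Finset.Ioi (1:Fin 3) = {2} from by decide,
    show Finset.Ioi (2:Fin 3) = ∅ from by decide]
  rw [Finset.sum_pair (by decide), Finset.sum_singleton, Finset.sum_empty]
  ring

lemma sum2 (w : Fin 2 → ℝ) :
    ∑ i : Fin 2, ∑ j ∈ Finset.Ioi i, w i * w j = w 0 * w 1 := by
  rw [Fin.sum_univ_two,
    show Finset.Ioi (0:Fin 2) = {1} from by decide,
    show Finset.Ioi (1:Fin 2) = ∅ from by decide]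
  rw [Finset.sum_singleton, Finset.sum_empty]
  ring

lemma fderiv3 (p v : Fin 3 → ℝ) :
    fderiv ℝ (fun w : Fin 3 → ℝ =>
        (1/(3:ℝ)^2) * (w 0 * w 1 + w 0 * w 2 + w 1 * w 2)) p v
      = (1/9) * ((v 0 * p 1 + p 0 * v 1) + (v 0 * p 2 + p 0 * v 2)
          + (v 1 * p 2 + p 1 * v 2)) := by
  have h : ∀ i : Fin 3, HasFDerivAt (fun w : Fin 3 → ℝ => w i)
      ((ContinuousLinearMap.proj i : ((Fin 3) → ℝ) →L[ℝ] ℝ)) p :=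
    fun i => by exact hasFDerivAt_apply i p
  have H := ((((h 0).mul (h 1)).add ((h 0).mul (h 2))).add
      ((h 1).mul (h 2))).const_mul (1/(3:ℝ)^2)
  rw [show fderiv ℝ (fun w : Fin 3 → ℝ =>
      (1/(3:ℝ)^2) * (w 0 * w 1 + w 0 * w 2 + w 1 * w 2)) p = _ from H.fderiv]
  simp [ContinuousLinearMap.proj_apply]
  ring

lemma fderiv2 (p v : Fin 2 → ℝ) :
    fderiv ℝ (fun w : Fin 2 → ℝ => (1/(2:ℝ)^2) * (w 0 * w 1)) p v
      = (1/4) * (v 0 * p 1 + p 0 * v 1) := by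
  have h : ∀ i : Fin 2, HasFDerivAt (fun w : Fin 2 → ℝ => w i)
      ((ContinuousLinearMap.proj i : ((Fin 2) → ℝ) →L[ℝ] ℝ)) p :=
    fun i => by exact hasFDerivAt_apply i p
  have H := ((h 0).mul (h 1)).const_mul (1/(2:ℝ)^2)
  rw [show fderiv ℝ (fun w : Fin 2 → ℝ => (1/(2:ℝ)^2) * (w 0 * w 1)) p = _ from H.fderiv]
  simp [ContinuousLinearMap.proj_apply]
  ring

lemma int_lin (c : ℝ) : (∫ τ in (0:ℝ)..1, c * τ) = c / 2 := by
  rw [intervalIntegral.integral_const_mul, integral_id]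
  ring

lemma orderIso02 (S : Finset (Fin 3)) (hS : S = {0, 2}) (hcard : S.card = 2) :
    ((S.orderIsoOfFin hcard 0 : S) : Fin 3) = 0 ∧
      ((S.orderIsoOfFin hcard 1 : S) : Fin 3) = 2 := by
  have ha : ((S.orderIsoOfFin hcard 0 : S) : Fin 3) ∈ ({0,2} : Finset (Fin 3)) := by
    rw [← hS]; exact (S.orderIsoOfFin hcard 0).2
  have hb : ((S.orderIsoOfFin hcard 1 : S) : Fin 3) ∈ ({0,2} : Finset (Fin 3)) := by
    rw [← hS]; exact (S.orderIsoOfFin hcard 1).2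
  have hlt : (S.orderIsoOfFin hcard 0) < (S.orderIsoOfFin hcard 1) :=
    (S.orderIsoOfFin hcard).lt_iff_lt.mpr (by decide)
  have hlt' : ((S.orderIsoOfFin hcard 0 : S) : Fin 3)
      < ((S.orderIsoOfFin hcard 1 : S) : Fin 3) := hlt
  simp only [Finset.mem_insert, Finset.mem_singleton] at ha hb
  rcases ha with ha | ha <;> rcases hb with hb | hb <;>
    rw [ha, hb] at hlt' ⊢ <;> first
  | exact ⟨rfl, rfl⟩
  | exact absurd hlt' (by decide)

/-- Explicit reconciliation failure at minimal size `N = 3` for the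
pairwise-product games `f_n(z) = (1/n²)·Σ_{i<j} z_i z_j` (`n ∈ {2,3}`), with
features `z = (1,1,2)`, zero baseline, and subset `S = {agent 0, agent 2}`
(the paper's 1-based `S = {1,3}`): `Δv^{[3]} = 5/9 ≠ 0`, `Δv^S = 1/2 ≠ 0`,
`φ̃_1 = φ̃_2 = 3/10`, `φ̃_3 = 2/5`, `φ̃_1^S = φ̃_3^S = 1/2`, and no scalar
`c ∈ ℝ` satisfies `φ̃_i^S = c·φ̃_i` for every `i ∈ S`. -/
theorem explicit_reconciliation_failure_N3
    (f2 : (Fin 2 → ℝ) → ℝ) (f3 : (Fin 3 → ℝ) → ℝ)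
    (hf2 : ∀ w, f2 w = (1 / (2 : ℝ) ^ 2) *
      ∑ i : Fin 2, ∑ j ∈ Finset.Ioi i, w i * w j)
    (hf3 : ∀ w, f3 w = (1 / (3 : ℝ) ^ 2) *
      ∑ i : Fin 3, ∑ j ∈ Finset.Ioi i, w i * w j)
    (z : Fin 3 → ℝ) (hz : z = ![1, 1, 2])
    (S : Finset (Fin 3)) (hS : S = {0, 2}) (hcard : S.card = 2) :
    f3 z - f3 (fun _ => 0) = 5 / 9 ∧ (5 / 9 : ℝ) ≠ 0 ∧
    f2 (fun k => z ((S.orderIsoOfFin hcard k : S) : Fin 3)) -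
      f2 (fun _ => 0) = 1 / 2 ∧ (1 / 2 : ℝ) ≠ 0 ∧
    phi01 f3 z 0 / (f3 z - f3 (fun _ => 0)) = 3 / 10 ∧
    phi01 f3 z 1 / (f3 z - f3 (fun _ => 0)) = 3 / 10 ∧
    phi01 f3 z 2 / (f3 z - f3 (fun _ => 0)) = 2 / 5 ∧
    (∀ k : Fin 2,
      phi01 f2 (fun k' => z ((S.orderIsoOfFin hcard k' : S) : Fin 3)) k /
        (f2 (fun k' => z ((S.orderIsoOfFin hcard k' : S) : Fin 3)) -
          f2 (fun _ => 0)) = 1 / 2) ∧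
    ¬∃ c : ℝ, ∀ (i : Fin 3) (hi : i ∈ S),
      phi01 f2 (fun k' => z ((S.orderIsoOfFin hcard k' : S) : Fin 3))
          ((S.orderIsoOfFin hcard).symm ⟨i, hi⟩) /
        (f2 (fun k' => z ((S.orderIsoOfFin hcard k' : S) : Fin 3)) -
          f2 (fun _ => 0)) =
        c * (phi01 f3 z i / (f3 z - f3 (fun _ => 0))) := by
  obtain ⟨h0, h2⟩ := orderIso02 S hS hcard
  have hf3' : f3 = fun w => (1/(3:ℝ)^2) * (w 0 * w 1 + w 0 * w 2 + w 1 * w 2) :=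
    funext fun w => by rw [hf3, sum3]
  have hf2' : f2 = fun w => (1/(2:ℝ)^2) * (w 0 * w 1) :=
    funext fun w => by rw [hf2, sum2]
  subst hf3' hf2' hz
  have hw : (fun k' : Fin 2 =>
      (![1,1,2] : Fin 3 → ℝ) ((S.orderIsoOfFin hcard k' : S) : Fin 3))
      = ![1, 2] := by
    funext k'
    fin_cases k' <;> simp [h0, h2]
  rw [hw]
  -- macro changes
  have Δ3 : (fun w : Fin 3 → ℝ => (1/(3:ℝ)^2) * (w 0 * w 1 + w 0 * w 2 + w 1 * w 2))
        (![1,1,2]) -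
      (fun w : Fin 3 → ℝ => (1/(3:ℝ)^2) * (w 0 * w 1 + w 0 * w 2 + w 1 * w 2))
        (fun _ => 0) = 5 / 9 := by
    norm_num [Matrix.cons_val_zero, Matrix.cons_val_one, Matrix.head_cons, Matrix.cons_val_two,
      Matrix.tail_cons]
  have Δ2 : (fun w : Fin 2 → ℝ => (1/(2:ℝ)^2) * (w 0 * w 1)) (![1,2]) -
      (fun w : Fin 2 → ℝ => (1/(2:ℝ)^2) * (w 0 * w 1)) (fun _ => 0) = 1 / 2 := by
    norm_num [Matrix.cons_val_zero, Matrix.cons_val_one, Matrix.head_cons]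
  -- attributions on the full population
  have p : ∀ (i : Fin 3) (c : ℝ),
      (∀ τ : ℝ, fderiv ℝ (fun w : Fin 3 → ℝ =>
          (1/(3:ℝ)^2) * (w 0 * w 1 + w 0 * w 2 + w 1 * w 2))
        (τ • (![1,1,2] : Fin 3 → ℝ)) (Pi.single i 1) = c * τ) →
      phi01 (fun w : Fin 3 → ℝ =>
          (1/(3:ℝ)^2) * (w 0 * w 1 + w 0 * w 2 + w 1 * w 2)) ![1,1,2] i
        = (![1,1,2] : Fin 3 → ℝ) i * (c / 2) := by
    intro i c h
    unfold phi01
    rw [intervalIntegral.integral_congr (g := fun τ : ℝ => c * τ)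
      (fun τ _ => h τ), int_lin]
  have p0 : phi01 (fun w : Fin 3 → ℝ =>
      (1/(3:ℝ)^2) * (w 0 * w 1 + w 0 * w 2 + w 1 * w 2)) ![1,1,2] 0 = 1/6 := by
    rw [p 0 (1/3) (fun τ => by
      rw [fderiv3]
      simp [Pi.single_apply, Matrix.cons_val_zero, Matrix.cons_val_one,
        Matrix.head_cons]
      ring)]
    norm_num
  have p1 : phi01 (fun w : Fin 3 → ℝ =>
      (1/(3:ℝ)^2) * (w 0 * w 1 + w 0 * w 2 + w 1 * w 2)) ![1,1,2] 1 = 1/6 := by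
    rw [p 1 (1/3) (fun τ => by
      rw [fderiv3]
      simp [Pi.single_apply, Matrix.cons_val_zero, Matrix.cons_val_one,
        Matrix.head_cons]
      ring)]
    norm_num
  have p2 : phi01 (fun w : Fin 3 → ℝ =>
      (1/(3:ℝ)^2) * (w 0 * w 1 + w 0 * w 2 + w 1 * w 2)) ![1,1,2] 2 = 2/9 := by
    rw [p 2 (2/9) (fun τ => by
      rw [fderiv3]
      simp [Pi.single_apply, Matrix.cons_val_zero, Matrix.cons_val_one,
        Matrix.head_cons]
      ring)]
    norm_num [Matrix.cons_val_two, Matrix.tail_cons, Matrix.head_cons]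
  -- attributions on the subset
  have q : ∀ k : Fin 2,
      phi01 (fun w : Fin 2 → ℝ => (1/(2:ℝ)^2) * (w 0 * w 1)) ![1,2] k = 1/4 := by
    intro k
    unfold phi01
    fin_cases k
    · rw [intervalIntegral.integral_congr (g := fun τ : ℝ => (1/2 : ℝ) * τ)
        (fun τ _ => by
          rw [fderiv2]
          simp [Pi.single_apply, Matrix.cons_val_zero, Matrix.cons_val_one,
            Matrix.head_cons]
          ring), int_lin]
      norm_num
    · rw [intervalIntegral.integral_congr (g := fun τ : ℝ => (1/4 : ℝ) * τ)
        (fun τ _ => by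
          rw [fderiv2]
          simp [Pi.single_apply, Matrix.cons_val_zero, Matrix.cons_val_one,
            Matrix.head_cons]), int_lin]
      norm_num
  refine ⟨Δ3, by norm_num, Δ2, by norm_num, ?_, ?_, ?_, ?_, ?_⟩
  · rw [p0, Δ3]; norm_num
  · rw [p1, Δ3]; norm_num
  · rw [p2, Δ3]; norm_num
  · intro k; rw [q k, Δ2]; norm_num
  · rintro ⟨c, hc⟩
    have hmem0 : (0 : Fin 3) ∈ S := by rw [hS]; decide
    have hmem2 : (2 : Fin 3) ∈ S := by rw [hS]; decide
    have s0 : (S.orderIsoOfFin hcard).symm ⟨0, hmem0⟩ = 0 := by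
      rw [OrderIso.symm_apply_eq]
      exact Subtype.ext h0.symm
    have s2 : (S.orderIsoOfFin hcard).symm ⟨2, hmem2⟩ = 1 := by
      rw [OrderIso.symm_apply_eq]
      exact Subtype.ext h2.symm
    have hc0 := hc 0 hmem0
    have hc2 := hc 2 hmem2
    rw [s0, q 0, Δ2, p0, Δ3] at hc0
    rw [s2, q 1, Δ2, p2, Δ3] at hc2
    norm_num at hc0 hc2
    linarith
end

section
/- Closed-form attribution for the multiplicative-saturating heat value function: fix n ≥ 1, D = 3, the zero baseline, features z_i = (a_i, b_i, c_i) ∈ ℝ³ with a_i, b_i, c_i ≥ 0 and Σ_j a_j > 0, Σ_j b_j > 0, Σ_j c_j > 0, and f^heat(z) := log(1 + m_a·m_b·m_c) where m_a := (1/n)·Σ_j a_j, m_b := (1/n)·Σ_j b_j, m_c := (1/n)·Σ_j c_j. Then for every i, the Aumann–Shapley attribution equals φ_i^heat = (1/3)·( a_i/Σ_j a_j + b_i/Σ_j b_j + c_i/Σ_j c_j )·f^heat(z), and Σ_{i=1}^n φ_i^heat = f^heat(z). -/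
set_option maxHeartbeats 1000000


open scoped BigOperators

/-- Aumann–Shapley path-integral attribution of agent `i` with zero baseline. -/
noncomputable def phi0 {n D : ℕ} (f : (Fin n → Fin D → ℝ) → ℝ)
    (z : Fin n → Fin D → ℝ) (i : Fin n) : ℝ :=
  ∑ d : Fin D, z i d *
    ∫ τ in (0:ℝ)..1, fderiv ℝ f (τ • z) (Pi.single i (Pi.single d 1))

/-- Closed-form attribution for the multiplicative-saturating heat value
function `f^heat(z) = log(1 + m_a·m_b·m_c)` with nonnegative features and
positive column sums:
`φ_i^heat = (1/3)·(a_i/Σ_j a_j + b_i/Σ_j b_j + c_i/Σ_j c_j)·f^heat(z)`,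
and the attributions sum to `f^heat(z)`. -/
theorem closed_form_attribution_heat
    (n : ℕ) (hn : 1 ≤ n)
    (z : Fin n → Fin 3 → ℝ)
    (hpos : ∀ (i : Fin n) (d : Fin 3), 0 ≤ z i d)
    (ha : 0 < ∑ j : Fin n, z j 0)
    (hb : 0 < ∑ j : Fin n, z j 1)
    (hc : 0 < ∑ j : Fin n, z j 2)
    (f : (Fin n → Fin 3 → ℝ) → ℝ)
    (hf : ∀ w, f w = Real.log (1 +
      ((1 / (n : ℝ)) * ∑ j : Fin n, w j 0) *
      ((1 / (n : ℝ)) * ∑ j : Fin n, w j 1) *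
      ((1 / (n : ℝ)) * ∑ j : Fin n, w j 2))) :
    (∀ i : Fin n, phi0 f z i =
      (1 / 3) * (z i 0 / (∑ j : Fin n, z j 0) + z i 1 / (∑ j : Fin n, z j 1) +
        z i 2 / (∑ j : Fin n, z j 2)) * f z) ∧
    ∑ i : Fin n, phi0 f z i = f z := by
  have hn0 : (0:ℝ) < n := by exact_mod_cast Nat.lt_of_lt_of_le Nat.zero_lt_one hn
  have hQpos : 0 < (((1/(n:ℝ)) * ∑ j : Fin n, z j 0) * ((1/(n:ℝ)) * ∑ j : Fin n, z j 1) *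
      ((1/(n:ℝ)) * ∑ j : Fin n, z j 2)) :=
    mul_pos (mul_pos (mul_pos (by positivity) ha) (mul_pos (by positivity) hb))
      (mul_pos (by positivity) hc)
  have hden : ∀ t : ℝ, 0 ≤ t → (0:ℝ) < 1 + t^3 * (((1/(n:ℝ)) * ∑ j : Fin n, z j 0) *
      ((1/(n:ℝ)) * ∑ j : Fin n, z j 1) * ((1/(n:ℝ)) * ∑ j : Fin n, z j 2)) := by
    intro t ht
    have := mul_nonneg (pow_nonneg ht 3) hQpos.le
    linarith
  -- pointwise derivative along the diagonal path
  have hfd : ∀ (i : Fin n) (d : Fin 3) (τ : ℝ), 0 ≤ τ →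
      fderiv ℝ f (τ • z) (Pi.single i (Pi.single d 1))
        = (((1/(n:ℝ)) * ∑ j : Fin n, z j 0) * ((1/(n:ℝ)) * ∑ j : Fin n, z j 1) *
            ((1/(n:ℝ)) * ∑ j : Fin n, z j 2)) / (∑ j : Fin n, z j d) *
          (τ^2 / (1 + τ^3 * (((1/(n:ℝ)) * ∑ j : Fin n, z j 0) *
            ((1/(n:ℝ)) * ∑ j : Fin n, z j 1) * ((1/(n:ℝ)) * ∑ j : Fin n, z j 2)))) := by
    intro i d τ hτ
    have hL : ∀ e : Fin 3,
        HasFDerivAt (fun w : Fin n → Fin 3 → ℝ => ∑ j : Fin n, w j e)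
          (∑ j : Fin n, (ContinuousLinearMap.proj (R := ℝ) (φ := fun _ : Fin 3 => ℝ) e).comp
            (ContinuousLinearMap.proj (R := ℝ) (φ := fun _ : Fin n => Fin 3 → ℝ) j)) (τ • z) := by
      intro e
      exact HasFDerivAt.fun_sum fun j _ =>
        ((ContinuousLinearMap.proj (R := ℝ) (φ := fun _ : Fin 3 => ℝ) e).comp
          (ContinuousLinearMap.proj (R := ℝ) (φ := fun _ : Fin n => Fin 3 → ℝ) j)).hasFDerivAt
    have h0 := (hL 0).const_mul (1/(n:ℝ))
    have h1 := (hL 1).const_mul (1/(n:ℝ))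
    have h2 := (hL 2).const_mul (1/(n:ℝ))
    have hg := ((h0.mul h1).mul h2).const_add 1
    have hsum : ∀ e : Fin 3, ∑ j : Fin n, (τ • z) j e = τ * ∑ j : Fin n, z j e := by
      intro e; simp [Finset.mul_sum]
    have hne : (1:ℝ) + ((1/(n:ℝ)) * ∑ j : Fin n, (τ • z) j 0) *
        ((1/(n:ℝ)) * ∑ j : Fin n, (τ • z) j 1) *
        ((1/(n:ℝ)) * ∑ j : Fin n, (τ • z) j 2) ≠ 0 := by
      rw [hsum 0, hsum 1, hsum 2]
      have := hden τ hτ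
      nlinarith [this]
    have hlog := hg.log hne
    have hF : HasFDerivAt f _ (τ • z) :=
      hlog.congr_of_eventuallyEq (Filter.Eventually.of_forall hf)
    rw [hF.fderiv]
    have hsingle : ∀ e : Fin 3,
        ∑ x : Fin n, (Pi.single i (Pi.single d (1:ℝ)) : Fin n → Fin 3 → ℝ) x e
          = if e = d then (1:ℝ) else 0 := by
      intro e
      classical
      have hx : ∀ x : Fin n, (Pi.single i (Pi.single d (1:ℝ)) : Fin n → Fin 3 → ℝ) x e
          = if x = i then (if e = d then (1:ℝ) else 0) else 0 := by
        intro x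
        by_cases hxi : x = i <;> simp [hxi, Pi.single_apply]
      simp [hx]
    simp only [ContinuousLinearMap.smul_apply, ContinuousLinearMap.add_apply,
      ContinuousLinearMap.coe_smul', Pi.smul_apply, ContinuousLinearMap.sum_apply,
      ContinuousLinearMap.comp_apply, ContinuousLinearMap.proj_apply, smul_eq_mul]
    simp only [Pi.smul_apply, smul_eq_mul, ← Finset.mul_sum, hsingle]
    have hA := ha.ne'; have hB := hb.ne'; have hC := hc.ne'
    have hD := (hden τ hτ).ne'
    clear hF hlog hg h0 h1 h2 hL hne hf hsum hsingle
    generalize hA' : (∑ j : Fin n, z j 0) = A at *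
    generalize hB' : (∑ j : Fin n, z j 1) = B at *
    generalize hC' : (∑ j : Fin n, z j 2) = C at *
    have hd : d = 0 ∨ d = 1 ∨ d = 2 := by
      have h3 := d.isLt
      simp only [Fin.ext_iff]
      omega
    rcases hd with rfl | rfl | rfl <;>
      norm_num [hA', hB', hC', Fin.ext_iff, ← Finset.mul_sum] <;> field_simp <;> ring
  -- the elementary interval integral
  have hint : (∫ τ in (0:ℝ)..1, τ^2 / (1 + τ^3 * (((1/(n:ℝ)) * ∑ j : Fin n, z j 0) *
        ((1/(n:ℝ)) * ∑ j : Fin n, z j 1) * ((1/(n:ℝ)) * ∑ j : Fin n, z j 2))))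
      = Real.log (1 + (((1/(n:ℝ)) * ∑ j : Fin n, z j 0) * ((1/(n:ℝ)) * ∑ j : Fin n, z j 1) *
          ((1/(n:ℝ)) * ∑ j : Fin n, z j 2)))
        / (3 * (((1/(n:ℝ)) * ∑ j : Fin n, z j 0) * ((1/(n:ℝ)) * ∑ j : Fin n, z j 1) *
          ((1/(n:ℝ)) * ∑ j : Fin n, z j 2))) := by
    set Q : ℝ := (((1/(n:ℝ)) * ∑ j : Fin n, z j 0) * ((1/(n:ℝ)) * ∑ j : Fin n, z j 1) *
      ((1/(n:ℝ)) * ∑ j : Fin n, z j 2)) with hQdef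
    have hQ0 : Q ≠ 0 := hQpos.ne'
    have huIcc : Set.uIcc (0:ℝ) 1 = Set.Icc 0 1 := Set.uIcc_of_le (by norm_num)
    have key : ∀ t ∈ Set.uIcc (0:ℝ) 1,
        HasDerivAt (fun u : ℝ => Real.log (1 + u^3 * Q) / (3 * Q)) (t^2 / (1 + t^3 * Q)) t := by
      intro t ht
      rw [huIcc] at ht
      have ht0 : 0 ≤ t := ht.1
      have hD := hden t ht0
      have h1 : HasDerivAt (fun u : ℝ => 1 + u^3 * Q) (3 * t^2 * Q) t := by
        have := ((hasDerivAt_pow 3 t).mul_const Q).const_add 1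
        refine this.congr_deriv ?_
        try push_cast
        try ring
      have h2 := (h1.log hD.ne').div_const (3 * Q)
      refine h2.congr_deriv ?_
      field_simp
      try ring
    have hcont : IntervalIntegrable (fun t : ℝ => t^2 / (1 + t^3 * Q))
        MeasureTheory.volume 0 1 := by
      apply ContinuousOn.intervalIntegrable
      apply ContinuousOn.div (by fun_prop) (by fun_prop)
      intro t ht
      rw [huIcc] at ht
      exact (hden t ht.1).ne'
    rw [intervalIntegral.integral_eq_sub_of_hasDerivAt key hcont]
    norm_num
  -- closed form for each attribution
  have hphi : ∀ i : Fin n, phi0 f z i =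
      (1 / 3) * (z i 0 / (∑ j : Fin n, z j 0) + z i 1 / (∑ j : Fin n, z j 1) +
        z i 2 / (∑ j : Fin n, z j 2)) *
      Real.log (1 + (((1/(n:ℝ)) * ∑ j : Fin n, z j 0) * ((1/(n:ℝ)) * ∑ j : Fin n, z j 1) *
        ((1/(n:ℝ)) * ∑ j : Fin n, z j 2))) := by
    intro i
    have hiint : ∀ d : Fin 3,
        (∫ τ in (0:ℝ)..1, fderiv ℝ f (τ • z) (Pi.single i (Pi.single d 1)))
          = (((1/(n:ℝ)) * ∑ j : Fin n, z j 0) * ((1/(n:ℝ)) * ∑ j : Fin n, z j 1) *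
              ((1/(n:ℝ)) * ∑ j : Fin n, z j 2)) / (∑ j : Fin n, z j d) *
            (Real.log (1 + (((1/(n:ℝ)) * ∑ j : Fin n, z j 0) * ((1/(n:ℝ)) * ∑ j : Fin n, z j 1) *
              ((1/(n:ℝ)) * ∑ j : Fin n, z j 2)))
            / (3 * (((1/(n:ℝ)) * ∑ j : Fin n, z j 0) * ((1/(n:ℝ)) * ∑ j : Fin n, z j 1) *
              ((1/(n:ℝ)) * ∑ j : Fin n, z j 2)))) := by
      intro d
      have heq : Set.EqOn (fun τ : ℝ => fderiv ℝ f (τ • z) (Pi.single i (Pi.single d 1)))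
          (fun τ : ℝ => (((1/(n:ℝ)) * ∑ j : Fin n, z j 0) * ((1/(n:ℝ)) * ∑ j : Fin n, z j 1) *
              ((1/(n:ℝ)) * ∑ j : Fin n, z j 2)) / (∑ j : Fin n, z j d) *
            (τ^2 / (1 + τ^3 * (((1/(n:ℝ)) * ∑ j : Fin n, z j 0) *
              ((1/(n:ℝ)) * ∑ j : Fin n, z j 1) * ((1/(n:ℝ)) * ∑ j : Fin n, z j 2)))))
          (Set.uIcc (0:ℝ) 1) := by
        intro τ hτ
        rw [Set.uIcc_of_le (by norm_num : (0:ℝ) ≤ 1)] at hτ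
        exact hfd i d τ hτ.1
      rw [intervalIntegral.integral_congr heq, intervalIntegral.integral_const_mul, hint]
    unfold phi0
    rw [Fin.sum_univ_three, hiint 0, hiint 1, hiint 2]
    have hA := ha.ne'; have hB := hb.ne'; have hC := hc.ne'
    have hQ0 := hQpos.ne'
    generalize hL' : Real.log (1 + (((1/(n:ℝ)) * ∑ j : Fin n, z j 0) *
      ((1/(n:ℝ)) * ∑ j : Fin n, z j 1) * ((1/(n:ℝ)) * ∑ j : Fin n, z j 2))) = L at *
    generalize hA' : (∑ j : Fin n, z j 0) = A at *
    generalize hB' : (∑ j : Fin n, z j 1) = B at *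
    generalize hC' : (∑ j : Fin n, z j 2) = C at *
    field_simp
  refine ⟨fun i => by rw [hphi i, hf z], ?_⟩
  rw [hf z]
  calc ∑ i : Fin n, phi0 f z i
      = ∑ i : Fin n, (1 / 3) * (z i 0 / (∑ j : Fin n, z j 0) + z i 1 / (∑ j : Fin n, z j 1) +
          z i 2 / (∑ j : Fin n, z j 2)) *
        Real.log (1 + (((1/(n:ℝ)) * ∑ j : Fin n, z j 0) * ((1/(n:ℝ)) * ∑ j : Fin n, z j 1) *
          ((1/(n:ℝ)) * ∑ j : Fin n, z j 2))) := Finset.sum_congr rfl fun i _ => hphi i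
    _ = Real.log (1 + (((1/(n:ℝ)) * ∑ j : Fin n, z j 0) * ((1/(n:ℝ)) * ∑ j : Fin n, z j 1) *
          ((1/(n:ℝ)) * ∑ j : Fin n, z j 2))) := by
        rw [← Finset.sum_mul, ← Finset.mul_sum]
        rw [Finset.sum_add_distrib, Finset.sum_add_distrib,
          ← Finset.sum_div, ← Finset.sum_div, ← Finset.sum_div,
          div_self ha.ne', div_self hb.ne', div_self hc.ne']
        norm_num
end

section
/- Closed-form attribution for the population-variance value function: fix n ≥ 1, D ≥ 1, the zero baseline, features z_i ∈ ℝ^D, g_i := Σ_{d=1}^D z_{i,d}, ḡ := (1/n)·Σ_{i=1}^n g_i, and f^var(z) := (1/n)·Σ_{i=1}^n (g_i − ḡ)². Then for every i, the Aumann–Shapley attribution equals φ_i^var = g_i·(g_i − ḡ)/n, and Σ_{i=1}^n φ_i^var = (1/n)·Σ_{i=1}^n (g_i − ḡ)² ≥ 0, i.e., the attributions sum to the population variance of (g_1,…,g_n). -/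
open scoped BigOperators

/-- The linear "group sum" map `w ↦ ∑ d, w i d`. -/
noncomputable def Gmap (n D : ℕ) (i : Fin n) : (Fin n → Fin D → ℝ) →L[ℝ] ℝ :=
  ∑ d : Fin D, (ContinuousLinearMap.proj d).comp
    (ContinuousLinearMap.proj (R := ℝ) (φ := fun _ : Fin n => Fin D → ℝ) i)

/-- The centered group sum map. -/
noncomputable def Hmap (n D : ℕ) (i : Fin n) : (Fin n → Fin D → ℝ) →L[ℝ] ℝ :=
  Gmap n D i - (1 / (n : ℝ)) • ∑ j : Fin n, Gmap n D j

lemma Gmap_apply (n D : ℕ) (i : Fin n) (w : Fin n → Fin D → ℝ) :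
    Gmap n D i w = ∑ d : Fin D, w i d := by
  simp [Gmap]

lemma Hmap_apply (n D : ℕ) (i : Fin n) (w : Fin n → Fin D → ℝ) :
    Hmap n D i w = (∑ d : Fin D, w i d)
      - (1 / (n : ℝ)) * ∑ j : Fin n, ∑ d : Fin D, w j d := by
  simp [Hmap, Gmap_apply, ContinuousLinearMap.sum_apply]

lemma Hmap_sum (n D : ℕ) (hn : 1 ≤ n) (w : Fin n → Fin D → ℝ) :
    ∑ i : Fin n, Hmap n D i w = 0 := by
  have hn' : (n : ℝ) ≠ 0 := by positivity
  simp only [Hmap_apply, Finset.sum_sub_distrib, Finset.sum_const,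
    Finset.card_univ, Fintype.card_fin, nsmul_eq_mul]
  field_simp
  ring

/-- Closed-form attribution for the population-variance value function
`f^var(z) = (1/n)·Σ_i (g_i − ḡ)²` with `g_i = Σ_d z_{i,d}` and
`ḡ = (1/n)·Σ_i g_i`: `φ_i^var = g_i·(g_i − ḡ)/n`, the attributions sum to
the population variance of `(g_1,…,g_n)`, and that sum is nonnegative. -/
theorem closed_form_attribution_variance
    (n D : ℕ) (hn : 1 ≤ n) (hD : 1 ≤ D)
    (f : (Fin n → Fin D → ℝ) → ℝ)
    (hf : ∀ w, f w = (1 / (n : ℝ)) * ∑ i : Fin n,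
      ((∑ d : Fin D, w i d) - (1 / (n : ℝ)) * ∑ j : Fin n, ∑ d : Fin D, w j d) ^ 2)
    (z : Fin n → Fin D → ℝ) :
    (∀ i : Fin n, phi0 f z i =
      (∑ d : Fin D, z i d) *
        ((∑ d : Fin D, z i d) -
          (1 / (n : ℝ)) * ∑ j : Fin n, ∑ d : Fin D, z j d) / n) ∧
    ∑ i : Fin n, phi0 f z i = (1 / (n : ℝ)) * ∑ i : Fin n,
      ((∑ d : Fin D, z i d) -
        (1 / (n : ℝ)) * ∑ j : Fin n, ∑ d : Fin D, z j d) ^ 2 ∧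
    0 ≤ ∑ i : Fin n, phi0 f z i := by
  have hn' : (n : ℝ) ≠ 0 := by positivity
  set H : Fin n → (Fin n → Fin D → ℝ) →L[ℝ] ℝ := Hmap n D with hH
  -- rewrite f in terms of H
  have hf' : f = fun w => (1 / (n : ℝ)) * ∑ i : Fin n, H i w * H i w := by
    funext w
    rw [hf w]
    congr 1
    refine Finset.sum_congr rfl fun i _ => ?_
    rw [Hmap_apply]; ring
  -- derivative of f
  have hderiv : ∀ w, HasFDerivAt f
      ((1 / (n : ℝ)) • ∑ k : Fin n, (H k w • H k + H k w • H k)) w := by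
    intro w
    rw [hf']
    exact (HasFDerivAt.fun_sum fun k _ => (H k).hasFDerivAt.mul
      (H k).hasFDerivAt).const_mul _
  -- the integrand
  have hint : ∀ (i : Fin n) (d : Fin D) (τ : ℝ),
      fderiv ℝ f (τ • z) (Pi.single i (Pi.single d 1)) =
        (2 / (n : ℝ)) * H i z * τ := by
    intro i d τ
    rw [(hderiv (τ • z)).fderiv]
    have he : ∀ k : Fin n, H k (Pi.single i (Pi.single d 1)) =
        (if k = i then (1:ℝ) else 0) - 1 / (n : ℝ) := by
      intro k
      have h1 : ∀ j : Fin n,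
          (∑ d' : Fin D, (Pi.single i (Pi.single d (1:ℝ)) : Fin n → Fin D → ℝ) j d') =
            if j = i then (1:ℝ) else 0 := by
        intro j; by_cases h : j = i <;>
          simp [h, Pi.single_apply, Finset.sum_pi_single]
      rw [hH, Hmap_apply, h1 k, Finset.sum_congr rfl fun j _ => h1 j,
        Finset.sum_ite_eq' Finset.univ i (fun _ => (1:ℝ))]
      simp
    have hτ : ∀ k : Fin n, H k (τ • z) = τ * H k z := by
      intro k; rw [map_smul, smul_eq_mul]
    simp only [ContinuousLinearMap.smul_apply, ContinuousLinearMap.sum_apply,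
      ContinuousLinearMap.add_apply, smul_eq_mul, he, hτ]
    have : ∀ k : Fin n,
        τ * H k z * ((if k = i then (1:ℝ) else 0) - 1 / (n : ℝ)) +
          τ * H k z * ((if k = i then (1:ℝ) else 0) - 1 / (n : ℝ)) =
        (2 * τ) * (if k = i then H k z else 0) - (2 * τ / n) * H k z := by
      intro k
      by_cases h : k = i <;> simp [h] <;> ring
    rw [Finset.sum_congr rfl fun k _ => this k, Finset.sum_sub_distrib,
      ← Finset.mul_sum, ← Finset.mul_sum, Finset.sum_ite_eq' Finset.univ i,
      Hmap_sum n D hn]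
    simp; ring
  -- the per-agent formula
  have hphi : ∀ i : Fin n, phi0 f z i = (∑ d : Fin D, z i d) * H i z / n := by
    intro i
    unfold phi0
    have : ∀ d : Fin D,
        (∫ τ in (0:ℝ)..1, fderiv ℝ f (τ • z) (Pi.single i (Pi.single d 1))) =
          H i z / n := by
      intro d
      simp only [hint i d]
      rw [intervalIntegral.integral_const_mul, integral_id]
      ring
    rw [Finset.sum_congr rfl fun d _ => by rw [this d], ← Finset.sum_mul]
    ring
  have hsum : ∑ i : Fin n, phi0 f z i = (1 / (n : ℝ)) * ∑ i : Fin n, (H i z) ^ 2 := by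
    rw [Finset.sum_congr rfl fun i _ => hphi i]
    have key : ∀ i : Fin n, (∑ d : Fin D, z i d) * H i z / n =
        (1 / (n : ℝ)) * ((H i z) ^ 2) + (1 / (n:ℝ)) *
          ((1 / (n : ℝ)) * (∑ j : Fin n, ∑ d : Fin D, z j d)) * H i z := by
      intro i
      have h2 := Hmap_apply n D i z
      rw [← hH] at h2
      have hg : (∑ d : Fin D, z i d) = H i z +
          (1 / (n : ℝ)) * (∑ j : Fin n, ∑ d : Fin D, z j d) := by
        rw [h2]; ring
      rw [hg]; ring
    rw [Finset.sum_congr rfl fun i _ => key i, Finset.sum_add_distrib,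
      ← Finset.mul_sum, ← Finset.mul_sum, hH, Hmap_sum n D hn]
    ring
  refine ⟨fun i => by rw [hphi i, hH, Hmap_apply], ?_, ?_⟩
  · rw [hsum]
    congr 1
    exact Finset.sum_congr rfl fun i _ => by rw [hH, Hmap_apply]
  · rw [hsum]; positivity
end

section
/- Closed-form attribution for the Gini mean-difference value function: fix n ≥ 2, D ≥ 1, the zero baseline, features z_i ∈ ℝ^D with composites g_i := Σ_{d=1}^D z_{i,d} pairwise distinct, and f^gini(z) := (1/(2n²))·Σ_{i=1}^n Σ_{j=1}^n |g_i − g_j|. Let k_i ∈ {1,…,n} be the rank of g_i in increasing order. Then along the linear path τ ↦ τ·z (τ ∈ (0,1]) the ranks are preserved, the Aumann–Shapley attribution of agent i equals φ_i^gini = g_i·(2k_i − n − 1)/n², and Σ_{i=1}^n φ_i^gini = f^gini(z). -/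
open scoped BigOperators

namespace GiniAux

variable {n D : ℕ}

/-- The continuous linear functional `w ↦ ∑ d, w a d`. -/
noncomputable def L (n D : ℕ) (a : Fin n) : (Fin n → Fin D → ℝ) →L[ℝ] ℝ :=
  ∑ d : Fin D, (ContinuousLinearMap.proj d : (Fin D → ℝ) →L[ℝ] ℝ).comp
    (ContinuousLinearMap.proj a : (Fin n → Fin D → ℝ) →L[ℝ] (Fin D → ℝ))

lemma L_apply (a : Fin n) (w : Fin n → Fin D → ℝ) : L n D a w = ∑ d : Fin D, w a d := by
  simp [L]

/-- Sign of `g a - g b`, written without `Real.sign`. -/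
noncomputable def sv (g : Fin n → ℝ) (a b : Fin n) : ℝ :=
  (if g b ≤ g a then 1 else 0) + (if g b < g a then 1 else 0) - 1

lemma sv_skew (g : Fin n → ℝ) (a b : Fin n) : sv g b a = - sv g a b := by
  rcases lt_trichotomy (g a) (g b) with h | h | h
  · simp [sv, h, h.le, not_le.mpr h, not_lt.mpr h.le]
  · simp [sv, h]
  · simp [sv, h, h.le, not_le.mpr h, not_lt.mpr h.le]

lemma abs_eq_sv (g : Fin n → ℝ) (a b : Fin n) : |g a - g b| = sv g a b * (g a - g b) := by
  rcases lt_trichotomy (g a) (g b) with h | h | h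
  · rw [abs_of_neg (sub_neg.mpr h)]
    simp [sv, not_le.mpr h, not_lt.mpr h.le]
  · simp [sv, h]
  · rw [abs_of_pos (sub_pos.mpr h)]
    simp [sv, h, h.le]

lemma sum_sv (g : Fin n → ℝ) (hdist : ∀ i j : Fin n, i ≠ j → g i ≠ g j) (i : Fin n) :
    ∑ j : Fin n, sv g i j
      = 2 * ((Finset.univ.filter fun j => g j ≤ g i).card : ℝ) - n - 1 := by
  classical
  have hins : (Finset.univ.filter fun j => g j ≤ g i)
      = insert i (Finset.univ.filter fun j => g j < g i) := by
    ext j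
    simp only [Finset.mem_filter, Finset.mem_univ, true_and, Finset.mem_insert]
    constructor
    · intro h
      rcases eq_or_ne j i with rfl | hji
      · exact Or.inl rfl
      · exact Or.inr (lt_of_le_of_ne h (hdist j i hji))
    · rintro (rfl | h)
      · exact le_rfl
      · exact h.le
  have hcard : (Finset.univ.filter fun j => g j ≤ g i).card
      = (Finset.univ.filter fun j => g j < g i).card + 1 := by
    rw [hins, Finset.card_insert_of_notMem (by simp)]
  simp only [sv, Finset.sum_sub_distrib, Finset.sum_add_distrib, Finset.sum_boole,
    Finset.sum_const, Finset.card_univ, Fintype.card_fin, nsmul_eq_mul, mul_one]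
  rw [hcard]
  push_cast
  ring

lemma term_hasFDerivAt (g : Fin n → ℝ) (z : Fin n → Fin D → ℝ)
    (hg : ∀ i, g i = ∑ d : Fin D, z i d)
    (hdist : ∀ i j : Fin n, i ≠ j → g i ≠ g j)
    {τ : ℝ} (hτ : 0 < τ) (a b : Fin n) :
    HasFDerivAt
      (fun w : Fin n → Fin D → ℝ => |(∑ d : Fin D, w a d) - ∑ d : Fin D, w b d|)
      (sv g a b • (L n D a - L n D b)) (τ • z) := by
  by_cases hab : a = b
  · subst hab
    have h0 : sv g a a = 0 := by simp [sv]
    rw [h0, zero_smul]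
    have hfun : (fun w : Fin n → Fin D → ℝ =>
        |(∑ d : Fin D, w a d) - ∑ d : Fin D, w a d|) = fun _ => (0:ℝ) := by
      funext w; simp
    rw [hfun]
    exact hasFDerivAt_const 0 _
  · set M : (Fin n → Fin D → ℝ) →L[ℝ] ℝ := L n D a - L n D b with hM
    have hMw : ∀ w : Fin n → Fin D → ℝ,
        M w = (∑ d : Fin D, w a d) - ∑ d : Fin D, w b d := by
      intro w; simp [hM, L_apply]
    have hMz : M (τ • z) = τ * (g a - g b) := by
      rw [hMw]
      simp only [Pi.smul_apply, smul_eq_mul, ← Finset.mul_sum, ← hg]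
      ring
    have hne : g a - g b ≠ 0 := sub_ne_zero.mpr (hdist a b hab)
    have hder : HasFDerivAt (fun w => sv g a b * M w) (sv g a b • M) (τ • z) :=
      (M.hasFDerivAt).const_mul _
    refine hder.congr_of_eventuallyEq ?_
    rcases hne.lt_or_gt with h | h
    · -- g a < g b
      have hsv : sv g a b = -1 := by
        simp [sv, not_le.mpr (sub_neg.mp h), not_lt.mpr (sub_neg.mp h).le]
      have hlt : M (τ • z) < 0 := by
        rw [hMz]; exact mul_neg_of_pos_of_neg hτ h
      have hev : ∀ᶠ w in nhds (τ • z), M w < 0 :=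
        (M.continuous.continuousAt).eventually (eventually_lt_nhds hlt)
      filter_upwards [hev] with w hw
      rw [← hMw w, abs_of_neg hw, hsv]; ring
    · -- g b < g a
      have hsv : sv g a b = 1 := by
        have h' : g b < g a := sub_pos.mp h
        simp [sv, h', h'.le]
      have hlt : 0 < M (τ • z) := by
        rw [hMz]; exact mul_pos hτ h
      have hev : ∀ᶠ w in nhds (τ • z), 0 < M w :=
        (M.continuous.continuousAt).eventually (eventually_gt_nhds hlt)
      filter_upwards [hev] with w hw
      rw [← hMw w, abs_of_pos hw, hsv]; ring

lemma L_single (a i : Fin n) (d : Fin D) :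
    L n D a (Pi.single i (Pi.single d 1)) = if a = i then (1:ℝ) else 0 := by
  classical
  rw [L_apply]
  rcases eq_or_ne a i with rfl | h
  · simp [Pi.single_apply, Finset.sum_ite_eq]
  · simp [Pi.single_apply, h]

lemma delta_double_sum (i : Fin n) (t : Fin n → Fin n → ℝ) :
    ∑ a : Fin n, ∑ b : Fin n,
        t a b * ((if a = i then (1:ℝ) else 0) - (if b = i then 1 else 0))
      = ∑ b : Fin n, t i b - ∑ a : Fin n, t a i := by
  classical
  simp only [mul_sub, Finset.sum_sub_distrib, mul_ite, mul_one, mul_zero]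
  congr 1
  · rw [Finset.sum_comm]
    simp [Finset.sum_ite_eq']
  · simp [Finset.sum_ite_eq']

end GiniAux

open GiniAux in
/-- Closed-form attribution for the Gini mean-difference value function
`f^gini(z) = (1/(2n²))·Σ_i Σ_j |g_i − g_j|` with pairwise-distinct composites
`g_i = Σ_d z_{i,d}` and rank `k_i = #{j : g_j ≤ g_i}`: along the linear path
`τ·z` (τ ∈ (0,1]) the ranks are preserved, the attribution is
`φ_i^gini = g_i·(2k_i − n − 1)/n²`, and the attributions sum to `f^gini(z)`. -/
theorem closed_form_attribution_gini
    (n D : ℕ) (hn : 2 ≤ n) (hD : 1 ≤ D)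
    (z : Fin n → Fin D → ℝ)
    (g : Fin n → ℝ) (hg : ∀ i, g i = ∑ d : Fin D, z i d)
    (hdist : ∀ i j : Fin n, i ≠ j → g i ≠ g j)
    (k : Fin n → ℕ)
    (hk : ∀ i, k i = (Finset.univ.filter (fun j => g j ≤ g i)).card)
    (f : (Fin n → Fin D → ℝ) → ℝ)
    (hf : ∀ w, f w = (1 / (2 * (n : ℝ) ^ 2)) *
      ∑ i : Fin n, ∑ j : Fin n, |(∑ d : Fin D, w i d) - ∑ d : Fin D, w j d|) :
    (∀ τ ∈ Set.Ioc (0:ℝ) 1, ∀ i : Fin n,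
      (Finset.univ.filter
        (fun j => (∑ d : Fin D, (τ • z) j d) ≤ ∑ d : Fin D, (τ • z) i d)).card
        = k i) ∧
    (∀ i : Fin n, phi0 f z i = g i * (2 * (k i : ℝ) - n - 1) / (n : ℝ) ^ 2) ∧
    ∑ i : Fin n, phi0 f z i = f z := by
  classical
  have hn0 : (n : ℝ) ≠ 0 := by positivity
  have hn2 : ((n : ℝ) ^ 2) ≠ 0 := pow_ne_zero _ hn0
  -- the sum of signs
  have hsum_sv : ∀ i : Fin n, ∑ j : Fin n, sv g i j = 2 * (k i : ℝ) - n - 1 := by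
    intro i
    rw [sum_sv g hdist i, hk i]
  -- rank preservation
  have part1 : ∀ τ ∈ Set.Ioc (0:ℝ) 1, ∀ i : Fin n,
      (Finset.univ.filter
        (fun j => (∑ d : Fin D, (τ • z) j d) ≤ ∑ d : Fin D, (τ • z) i d)).card
        = k i := by
    intro τ hτ i
    rw [hk i]
    congr 1
    apply Finset.filter_congr
    intro j _
    simp only [Pi.smul_apply, smul_eq_mul, ← Finset.mul_sum, ← hg]
    simp [mul_le_mul_iff_right₀ hτ.1]
  -- the global derivative
  set F : (Fin n → Fin D → ℝ) →L[ℝ] ℝ :=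
    (1 / (2 * (n : ℝ) ^ 2)) •
      ∑ a : Fin n, ∑ b : Fin n, sv g a b • (L n D a - L n D b) with hF
  have hder : ∀ {τ : ℝ}, 0 < τ → HasFDerivAt f F (τ • z) := by
    intro τ hτ
    have hfun : f = fun w => (1 / (2 * (n : ℝ) ^ 2)) *
        ∑ i : Fin n, ∑ j : Fin n, |(∑ d : Fin D, w i d) - ∑ d : Fin D, w j d| :=
      funext hf
    rw [hfun, hF]
    exact (HasFDerivAt.fun_sum fun a _ => HasFDerivAt.fun_sum fun b _ =>
      term_hasFDerivAt g z hg hdist hτ a b).const_mul _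
  -- evaluating the derivative at the basis directions
  have hFe : ∀ (i : Fin n) (d : Fin D),
      F (Pi.single i (Pi.single d 1)) = (2 * (k i : ℝ) - n - 1) / (n : ℝ) ^ 2 := by
    intro i d
    have h1 : F (Pi.single i (Pi.single d 1)) = (1 / (2 * (n : ℝ) ^ 2)) *
        ∑ a : Fin n, ∑ b : Fin n, sv g a b *
          ((if a = i then (1:ℝ) else 0) - (if b = i then 1 else 0)) := by
      rw [hF]
      simp only [ContinuousLinearMap.smul_apply, ContinuousLinearMap.coe_sum',
        Finset.sum_apply, ContinuousLinearMap.sub_apply, smul_eq_mul, L_single]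
    rw [h1, delta_double_sum i (sv g)]
    have h2 : ∑ a : Fin n, sv g a i = - ∑ b : Fin n, sv g i b := by
      rw [← Finset.sum_neg_distrib]
      exact Finset.sum_congr rfl fun a _ => sv_skew g i a
    rw [h2, hsum_sv i]
    field_simp
    ring
  -- the integral of the (constant on (0,1]) derivative
  have hI : ∀ (i : Fin n) (d : Fin D),
      (∫ τ in (0:ℝ)..1, fderiv ℝ f (τ • z) (Pi.single i (Pi.single d 1)))
        = (2 * (k i : ℝ) - n - 1) / (n : ℝ) ^ 2 := by
    intro i d
    rw [intervalIntegral.integral_of_le zero_le_one]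
    have heq : ∀ τ ∈ Set.Ioc (0:ℝ) 1,
        fderiv ℝ f (τ • z) (Pi.single i (Pi.single d 1))
          = (2 * (k i : ℝ) - n - 1) / (n : ℝ) ^ 2 := by
      intro τ hτ
      rw [(hder hτ.1).fderiv, hFe]
    rw [MeasureTheory.setIntegral_congr_fun measurableSet_Ioc heq]
    simp [Real.volume_Ioc]
  -- part 2
  have part2 : ∀ i : Fin n,
      phi0 f z i = g i * (2 * (k i : ℝ) - n - 1) / (n : ℝ) ^ 2 := by
    intro i
    unfold phi0
    simp only [hI]
    rw [← Finset.sum_mul, ← hg]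
    ring
  refine ⟨part1, part2, ?_⟩
  -- part 3
  have habs : ∑ i : Fin n, ∑ j : Fin n, |g i - g j|
      = 2 * ∑ i : Fin n, g i * (2 * (k i : ℝ) - n - 1) := by
    have step1 : ∑ i : Fin n, ∑ j : Fin n, |g i - g j|
        = ∑ i : Fin n, ∑ j : Fin n, sv g i j * (g i - g j) := by
      exact Finset.sum_congr rfl fun i _ => Finset.sum_congr rfl fun j _ => abs_eq_sv g i j
    have step2 : ∑ i : Fin n, ∑ j : Fin n, sv g i j * g j
        = - ∑ i : Fin n, (∑ j : Fin n, sv g i j) * g i := by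
      rw [Finset.sum_comm]
      rw [← Finset.sum_neg_distrib]
      refine Finset.sum_congr rfl fun j _ => ?_
      rw [← Finset.sum_mul, ← neg_mul]
      congr 1
      rw [← Finset.sum_neg_distrib]
      exact Finset.sum_congr rfl fun a _ => sv_skew g j a
    calc ∑ i : Fin n, ∑ j : Fin n, |g i - g j|
        = ∑ i : Fin n, ∑ j : Fin n, (sv g i j * g i - sv g i j * g j) := by
          rw [step1]; simp [mul_sub]
      _ = ∑ i : Fin n, ∑ j : Fin n, sv g i j * g i
            - ∑ i : Fin n, ∑ j : Fin n, sv g i j * g j := by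
          simp [Finset.sum_sub_distrib]
      _ = ∑ i : Fin n, (∑ j : Fin n, sv g i j) * g i
            + ∑ i : Fin n, (∑ j : Fin n, sv g i j) * g i := by
          rw [step2, sub_neg_eq_add]
          congr 1 <;>
            exact Finset.sum_congr rfl fun i _ => (Finset.sum_mul _ _ _).symm
      _ = 2 * ∑ i : Fin n, g i * (2 * (k i : ℝ) - n - 1) := by
          rw [← two_mul, Finset.mul_sum, Finset.mul_sum]
          refine Finset.sum_congr rfl fun i _ => ?_
          rw [hsum_sv i]; ring
  rw [hf z]
  simp only [part2, ← hg]
  rw [habs]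
  rw [Finset.sum_congr rfl (fun i (_ : i ∈ Finset.univ) =>
    (by ring : g i * (2 * (k i : ℝ) - n - 1) / (n : ℝ) ^ 2
      = (1 / (n : ℝ) ^ 2) * (g i * (2 * (k i : ℝ) - n - 1))))]
  rw [← Finset.mul_sum]
  field_simp
end

section
/- Common slot gradient under permutation invariance: fix n ≥ 2, D ≥ 1, and let f : (ℝ^D)^n → ℝ be C² and permutation-invariant, with ∂²f/(∂z_{i,d} ∂z_{j,d'}) ≡ 0 for all i ≠ j and all d, d'. Then there exists a single map ξ : ℝ^D → ℝ^D such that for every slot i ∈ {1,…,n} and every z ∈ (ℝ^D)^n, the gradient of f with respect to its i-th slot satisfies ∇_{z_i} f(z) = ξ(z_i); in particular, ∇_{z_i} f(z) depends on z only through z_i and the same function ξ works for every slot. -/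
open scoped BigOperators

/-- Common slot gradient under permutation invariance: if `f` is `C²`,
permutation-invariant, and all mixed second partials across distinct slots
vanish, then there is a single map `ξ : ℝ^D → ℝ^D` such that for every slot
`i` and every configuration `z`, the gradient of `f` with respect to its
`i`-th slot equals `ξ(z_i)`. -/
theorem common_slot_gradient_under_permutation_invariance
    (n D : ℕ) (hn : 2 ≤ n) (hD : 1 ≤ D)
    (f : (Fin n → Fin D → ℝ) → ℝ) (hf : ContDiff ℝ 2 f)
    (hsym : ∀ (π : Equiv.Perm (Fin n)) (z : Fin n → Fin D → ℝ),
      f (fun k => z (π k)) = f z)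
    (hhess : ∀ (i j : Fin n), i ≠ j →
      ∀ (d d' : Fin D) (z : Fin n → Fin D → ℝ), mixedPartial f i d j d' z = 0) :
    ∃ ξ : (Fin D → ℝ) → (Fin D → ℝ),
      ∀ (i : Fin n) (z : Fin n → Fin D → ℝ) (d : Fin D),
        fderiv ℝ f z (Pi.single i (Pi.single d 1)) = ξ (z i) d := by
  classical
  have hfd : Differentiable ℝ f := hf.differentiable (by norm_num)
  have hF : ContDiff ℝ 1 (fderiv ℝ f) := hf.fderiv_right (by norm_num)
  -- Step 1: the slot-j gradient depends only on the j-th coordinate.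
  have key : ∀ (j : Fin n) (d' : Fin D) (z z' : Fin n → Fin D → ℝ),
      z j = z' j →
      fderiv ℝ f z (Pi.single j (Pi.single d' 1))
        = fderiv ℝ f z' (Pi.single j (Pi.single d' 1)) := by
    intro j d' z z' hzz
    set g : (Fin n → Fin D → ℝ) → ℝ :=
      fun w => fderiv ℝ f w (Pi.single j (Pi.single d' 1)) with hg_def
    have hg : Differentiable ℝ g :=
      (hF.differentiable (by norm_num)).clm_apply (differentiable_const _)
    have hzero : ∀ (w v : Fin n → Fin D → ℝ), v j = 0 → fderiv ℝ g w v = 0 := by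
      intro w v hvj
      have hv : v = ∑ i : Fin n, ∑ d : Fin D,
          v i d • (Pi.single i (Pi.single d (1:ℝ)) : Fin n → Fin D → ℝ) := by
        funext k k'
        simp only [Finset.sum_apply, Pi.smul_apply, Pi.single_apply, smul_eq_mul,
          apply_ite (fun (g : Fin D → ℝ) => g k'), Pi.zero_apply, mul_ite, mul_one,
          mul_zero]
        rw [Finset.sum_eq_single k]
        · simp [Finset.sum_ite_eq]
        · intro b _ hb
          simp [Ne.symm hb]
        · simp
      rw [hv]
      simp only [map_sum, map_smul]
      refine Finset.sum_eq_zero (fun i _ => Finset.sum_eq_zero (fun d _ => ?_))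
      rcases eq_or_ne i j with rfl | hij
      · rw [hvj]
        simp
      · have h := hhess i j hij d d' w
        have : fderiv ℝ g w (Pi.single i (Pi.single d (1:ℝ))) = 0 := h
        rw [this]
        simp
    set v : Fin n → Fin D → ℝ := z' - z with hv_def
    have hvj : v j = 0 := by
      simp [hv_def, hzz]
    have hφ : ∀ t : ℝ, HasDerivAt (fun t : ℝ => g (z + t • v)) 0 t := by
      intro t
      have h1 : HasDerivAt (fun t : ℝ => z + t • v) v t := by
        simpa using ((hasDerivAt_id t).smul_const v).const_add z
      have h2 := (hg (z + t • v)).hasFDerivAt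
      have h3 := h2.comp_hasDerivAt t h1
      simpa [hzero _ v hvj, Function.comp_def] using h3
    have hconst : g (z + (0:ℝ) • v) = g (z + (1:ℝ) • v) := is_const_of_deriv_eq_zero
      (fun t => (hφ t).differentiableAt) (fun t => (hφ t).deriv) 0 1
    have h0 : z + (0:ℝ) • v = z := by simp
    have h1 : z + (1:ℝ) • v = z' := by
      simp only [one_smul, hv_def]
      abel
    rw [h0, h1] at hconst
    exact hconst
  -- Step 2: by permutation invariance, the slot can be swapped to slot 0.
  have hn0 : 0 < n := by omega
  set i0 : Fin n := ⟨0, hn0⟩ with hi0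
  have hswap : ∀ (i : Fin n) (x : Fin D → ℝ) (d : Fin D),
      fderiv ℝ f (fun _ => x) (Pi.single i (Pi.single d 1))
        = fderiv ℝ f (fun _ => x) (Pi.single i0 (Pi.single d 1)) := by
    intro i x d
    set π : Equiv.Perm (Fin n) := Equiv.swap i0 i with hπ
    set L : (Fin n → Fin D → ℝ) →L[ℝ] (Fin n → Fin D → ℝ) :=
      ContinuousLinearMap.pi (fun k => ContinuousLinearMap.proj (π k)) with hL
    have hLapp : ∀ (w : Fin n → Fin D → ℝ) (k : Fin n), L w k = w (π k) := by
      intro w k; rfl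
    have hfL : (fun w => f (L w)) = f := by
      funext w
      have : L w = fun k => w (π k) := by funext k; exact hLapp w k
      rw [this]
      exact hsym π w
    set z0 : Fin n → Fin D → ℝ := fun _ => x with hz0
    have hLz0 : L z0 = z0 := by
      funext k; exact hLapp z0 k
    have hchain : fderiv ℝ (fun w => f (L w)) z0
        = (fderiv ℝ f (L z0)).comp L := by
      have := fderiv_comp (𝕜 := ℝ) z0 (hfd (L z0)) L.differentiableAt
      simpa [L.fderiv, Function.comp_def] using this
    have heq : fderiv ℝ f z0 = (fderiv ℝ f z0).comp L := by
      rw [← hLz0]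
      rw [← hchain, hfL, hLz0]
    have hLe : L (Pi.single i0 (Pi.single d (1:ℝ))) = Pi.single i (Pi.single d 1) := by
      funext k
      rw [hLapp]
      rcases eq_or_ne k i with rfl | hk
      · simp [hπ, Equiv.swap_apply_right, Pi.single_apply]
      · rcases eq_or_ne k i0 with rfl | hk0
        · simp [hπ, Equiv.swap_apply_left, Pi.single_apply, hk, Ne.symm hk]
        · have : π k = k := Equiv.swap_apply_of_ne_of_ne hk0 hk
          simp [this, Pi.single_apply, hk, hk0]
    calc fderiv ℝ f z0 (Pi.single i (Pi.single d 1))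
        = fderiv ℝ f z0 (L (Pi.single i0 (Pi.single d 1))) := by rw [hLe]
      _ = ((fderiv ℝ f z0).comp L) (Pi.single i0 (Pi.single d 1)) := rfl
      _ = fderiv ℝ f z0 (Pi.single i0 (Pi.single d 1)) := by rw [← heq]
  refine ⟨fun x d => fderiv ℝ f (fun _ => x) (Pi.single i0 (Pi.single d 1)), ?_⟩
  intro i z d
  have h1 := key i d z (fun _ => z i) rfl
  rw [h1, hswap i (z i) d]
end

section
/- Telescoping additive decomposition: fix n ≥ 1, D ≥ 1, let f : (ℝ^D)^n → ℝ be C¹, and suppose there exists Ψ : ℝ^D → ℝ of class C¹ such that ∇_{z_i} f(z) = ∇Ψ(z_i) for every slot i and every z ∈ (ℝ^D)^n. Then for every fixed z* ∈ ℝ^D and every z ∈ (ℝ^D)^n, f(z_1,…,z_n) = f(z*,…,z*) + Σ_{i=1}^n (Ψ(z_i) − Ψ(z*)); in particular, setting μ(y) := n·Ψ(y) + f(z*,…,z*) − n·Ψ(z*) gives f(z) = (1/n)·Σ_{i=1}^n μ(z_i). -/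
open scoped BigOperators

-- helper: apply a CLM to a vector, decomposed over single basis
lemma clm_decomp {ι : Type*} [Fintype ι] [DecidableEq ι]
    (L : (ι → ℝ) →L[ℝ] ℝ) (v : ι → ℝ) :
    L v = ∑ d, v d * L (Pi.single d 1) := by
  conv_lhs => rw [← Finset.univ_sum_single v]
  rw [map_sum]
  refine Finset.sum_congr rfl fun d _ => ?_
  have : (Pi.single d (v d) : ι → ℝ) = v d • (Pi.single d 1 : ι → ℝ) := by
    rw [← Pi.single_smul, smul_eq_mul, mul_one]
  rw [this, map_smul, smul_eq_mul]

/-- Telescoping additive decomposition: if `f : (ℝ^D)^n → ℝ` is `C¹` and there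
is a `C¹` potential `Ψ : ℝ^D → ℝ` with `∇_{z_i} f(z) = ∇Ψ(z_i)` for every slot
`i` and every `z`, then for every fixed `z*` and every `z`,
`f(z) = f(z*,…,z*) + Σ_i (Ψ(z_i) − Ψ(z*))`; in particular, with
`μ(y) := n·Ψ(y) + f(z*,…,z*) − n·Ψ(z*)`, `f(z) = (1/n)·Σ_i μ(z_i)`. -/
theorem telescoping_additive_decomposition
    (n D : ℕ) (hn : 1 ≤ n) (hD : 1 ≤ D)
    (f : (Fin n → Fin D → ℝ) → ℝ) (hf : ContDiff ℝ 1 f)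
    (Ψ : (Fin D → ℝ) → ℝ) (hΨ : ContDiff ℝ 1 Ψ)
    (hgrad : ∀ (i : Fin n) (z : Fin n → Fin D → ℝ) (d : Fin D),
      fderiv ℝ f z (Pi.single i (Pi.single d 1)) =
        fderiv ℝ Ψ (z i) (Pi.single d 1)) :
    ∀ (zstar : Fin D → ℝ) (z : Fin n → Fin D → ℝ),
      f z = f (fun _ => zstar) + ∑ i : Fin n, (Ψ (z i) - Ψ zstar) ∧
      f z = (1 / (n : ℝ)) *
        ∑ i : Fin n, ((n : ℝ) * Ψ (z i) + f (fun _ => zstar) -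
          (n : ℝ) * Ψ zstar) := by
  have hΨd := hΨ.differentiable one_ne_zero
  have hfd := hf.differentiable one_ne_zero
  have heval : ∀ i : Fin n, Differentiable ℝ (fun z : Fin n → Fin D → ℝ => z i) :=
    fun i => differentiable_pi.mp differentiable_id i
  have hcomp : ∀ i : Fin n, Differentiable ℝ (fun z : Fin n → Fin D → ℝ => Ψ (z i)) :=
    fun i => hΨd.comp (heval i)
  have key : ∀ x y : Fin n → Fin D → ℝ,
      (fun z => f z - ∑ i, Ψ (z i)) x = (fun z => f z - ∑ i, Ψ (z i)) y := by
    apply is_const_of_fderiv_eq_zero (𝕜 := ℝ)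
    · exact hfd.sub (Differentiable.fun_sum fun i _ => hcomp i)
    · intro z
      have hG : ∀ i : Fin n, HasFDerivAt (fun z : Fin n → Fin D → ℝ => Ψ (z i))
          ((fderiv ℝ Ψ (z i)).comp (ContinuousLinearMap.proj i)) z :=
        fun i => (hΨd (z i)).hasFDerivAt.comp z (hasFDerivAt_apply i z)
      have hF : HasFDerivAt (fun z => f z - ∑ i, Ψ (z i))
          (fderiv ℝ f z - ∑ i, (fderiv ℝ Ψ (z i)).comp (ContinuousLinearMap.proj i)) z :=
        (hfd z).hasFDerivAt.sub (HasFDerivAt.fun_sum fun i _ => hG i)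
      rw [hF.fderiv]
      ext v
      simp only [ContinuousLinearMap.sub_apply, ContinuousLinearMap.coe_sum',
        Finset.sum_apply, ContinuousLinearMap.comp_apply,
        ContinuousLinearMap.proj_apply, ContinuousLinearMap.zero_apply]
      -- goal: fderiv f z v - ∑ i, fderiv Ψ (z i) (v i) = 0
      have hdec : fderiv ℝ f z v = ∑ i, fderiv ℝ Ψ (z i) (v i) := by
        have hv : v = ∑ i, Pi.single i (v i) := (Finset.univ_sum_single v).symm
        conv_lhs => rw [hv]
        rw [map_sum]
        refine Finset.sum_congr rfl fun i _ => ?_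
        have hvi : (Pi.single i (v i) : Fin n → Fin D → ℝ)
            = ∑ d, v i d • (Pi.single i (Pi.single d 1 : Fin D → ℝ) : Fin n → Fin D → ℝ) := by
          conv_lhs => rw [← Finset.univ_sum_single (v i)]
          rw [← LinearMap.single_apply (R := ℝ) (φ := fun _ : Fin n => Fin D → ℝ),
            map_sum (LinearMap.single ℝ (fun _ : Fin n => Fin D → ℝ) i) (fun d => (Pi.single d (v i d) : Fin D → ℝ)) Finset.univ]
          refine Finset.sum_congr rfl fun d _ => ?_
          simp only [LinearMap.single_apply]
          rw [← Pi.single_smul, ← Pi.single_smul, smul_eq_mul, mul_one]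
        rw [hvi, map_sum]
        rw [clm_decomp (fderiv ℝ Ψ (z i)) (v i)]
        refine Finset.sum_congr rfl fun d _ => ?_
        rw [map_smul, smul_eq_mul, hgrad i z d]
      rw [hdec, sub_self]
  intro zstar z
  have hkey := key z (fun _ => zstar)
  simp only at hkey
  have h1 : f z = f (fun _ => zstar) + ∑ i : Fin n, (Ψ (z i) - Ψ zstar) := by
    have : (∑ _i : Fin n, Ψ zstar) = n * Ψ zstar := by
      simp [Finset.sum_const, nsmul_eq_mul]
    simp only [Finset.sum_sub_distrib] at *
    linarith [hkey]
  have hnR : (n:ℝ) ≠ 0 := Nat.cast_ne_zero.mpr (by omega)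
  refine ⟨h1, ?_⟩
  rw [h1]
  rw [Finset.sum_sub_distrib]
  simp only [Finset.sum_add_distrib, Finset.sum_sub_distrib, ← Finset.mul_sum,
    Finset.sum_const, Finset.card_univ, Fintype.card_fin, nsmul_eq_mul]
  field_simp
  ring
end
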